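/- For the Arnoldi aggregation of size j of (P, p_0) with P row-stochastic, if K^j(p_0,P) is invariant under P and π is any vector with π^T H_j = π^T (a left eigenvector of H_j with eigenvalue 1), then the disaggregated vector μ^T := π^T Q_j satisfies μ^T P = μ^T, i.e., μ is a left eigenvector (stationary vector up to scaling) of P. -/

import Mathlib

open Matrix Finset

/-- Euclidean norm of a row vector. -/
noncomputable def norm2 {n : ℕ} (v : Fin n → ℝ) : ℝ := Real.sqrt (v ⬝ᵥ v)

/-- One Gram–Schmidt projection-subtraction step. -/
noncomputable def gsStep {n : ℕ} (r q : Fin n → ℝ) : Fin n → ℝ := r - (r ⬝ᵥ q) • q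

/-- List `[q_0, …, q_j]` of Arnoldi vectors after `j` expansion steps applied to `(v, M)`. -/
noncomputable def arnoldiList {n : ℕ} (v : Fin n → ℝ) (M : Matrix (Fin n) (Fin n) ℝ) :
    ℕ → List (Fin n → ℝ)
  | 0 => [(norm2 v)⁻¹ • v]
  | j + 1 =>
    let qs := arnoldiList v M j
    let r := qs.foldl gsStep (Matrix.vecMul (qs.getLastD 0) M)
    qs ++ [(norm2 r)⁻¹ • r]

/-- The Arnoldi vector `q_{i+1}` of the paper (0-indexed: `aQ v M i`). -/
noncomputable def aQ {n : ℕ} (v : Fin n → ℝ) (M : Matrix (Fin n) (Fin n) ℝ) (i : ℕ) :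
    Fin n → ℝ :=
  (arnoldiList v M i).getLastD 0

/-- Partial residual `r^{(i)}` in outer step `j` (0-indexed): `q_j M` minus the projections
onto `q_0, …, q_{i-1}`. -/
noncomputable def pres {n : ℕ} (v : Fin n → ℝ) (M : Matrix (Fin n) (Fin n) ℝ) (j i : ℕ) :
    Fin n → ℝ :=
  ((arnoldiList v M j).take i).foldl gsStep (Matrix.vecMul (aQ v M j) M)

/-- The Gram–Schmidt coefficient `h_{j,i}` (0-indexed in both arguments). -/
noncomputable def aH {n : ℕ} (v : Fin n → ℝ) (M : Matrix (Fin n) (Fin n) ℝ) (j i : ℕ) : ℝ :=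
  pres v M j i ⬝ᵥ aQ v M i

/-- The subdiagonal coefficient `h_{j, j+1} = ‖r_{j+1}‖₂` (0-indexed in `j`). -/
noncomputable def hsub {n : ℕ} (v : Fin n → ℝ) (M : Matrix (Fin n) (Fin n) ℝ) (j : ℕ) : ℝ :=
  norm2 (pres v M j (j + 1))

/-- The upper-Hessenberg matrix `H_j` produced by `j` Arnoldi steps. -/
noncomputable def arnoldiHmat {n : ℕ} (v : Fin n → ℝ) (M : Matrix (Fin n) (Fin n) ℝ) (j : ℕ) :
    Matrix (Fin j) (Fin j) ℝ := fun i l =>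
  if (l : ℕ) ≤ (i : ℕ) then aH v M i l
  else if (l : ℕ) = (i : ℕ) + 1 then hsub v M i else 0

/-- The matrix `Q_j` whose rows are the Arnoldi vectors `q_1, …, q_j` of the paper. -/
noncomputable def arnoldiQmat {n : ℕ} (v : Fin n → ℝ) (M : Matrix (Fin n) (Fin n) ℝ) (j : ℕ) :
    Matrix (Fin j) (Fin n) ℝ := fun i => aQ v M i

/-- The Krylov subspace `K^j(v, M) = span{v, vM, …, vM^{j-1}}` (of row vectors). -/
noncomputable def krylov {n : ℕ} (v : Fin n → ℝ) (M : Matrix (Fin n) (Fin n) ℝ) (j : ℕ) :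
    Submodule ℝ (Fin n → ℝ) :=
  Submodule.span ℝ (Set.range fun i : Fin j => Matrix.vecMul v (M ^ (i : ℕ)))

section lems
variable {n : ℕ} (v : Fin n → ℝ) (M : Matrix (Fin n) (Fin n) ℝ)

lemma arnoldiList_length : ∀ i, (arnoldiList v M i).length = i + 1 := by
  intro i; induction i with
  | zero => simp [arnoldiList]
  | succ i ih => simp [arnoldiList, ih]

lemma arnoldi_concat (i : ℕ) : arnoldiList v M (i+1) = arnoldiList v M i ++
    [(norm2 (pres v M i (i+1)))⁻¹ • pres v M i (i+1)] := by
  have htake : (arnoldiList v M i).take (i+1) = arnoldiList v M i :=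
    List.take_of_length_le (le_of_eq (arnoldiList_length v M i))
  show arnoldiList v M i ++ _ = _
  rw [pres, htake, aQ]

lemma aQ_succ (i : ℕ) :
    aQ v M (i+1) = (norm2 (pres v M i (i+1)))⁻¹ • pres v M i (i+1) := by
  rw [aQ, arnoldi_concat, List.getLastD_concat]

lemma arnoldiList_eq : ∀ i, arnoldiList v M i = (List.range (i+1)).map (aQ v M) := by
  intro i
  induction i with
  | zero => rw [show List.range 1 = [0] from rfl]; rfl
  | succ i ih =>
    rw [arnoldi_concat, ih, ← aQ_succ]
    simp [List.range_succ]
lemma pres_zero (m : ℕ) : pres v M m 0 = Matrix.vecMul (aQ v M m) M := by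
  simp [pres]

lemma pres_succ (m i : ℕ) (h : i ≤ m) :
    pres v M m (i+1) = gsStep (pres v M m i) (aQ v M i) := by
  rw [pres, pres, arnoldiList_eq, ← List.map_take, ← List.map_take, List.take_range,
    List.take_range]
  have h1 : min (i+1) (m+1) = i + 1 := by omega
  have h2 : min i (m+1) = i := by omega
  rw [h1, h2, List.range_succ, List.map_append, List.foldl_append]
  simp

lemma pres_formula (m : ℕ) : ∀ i, i ≤ m + 1 →
    pres v M m i = Matrix.vecMul (aQ v M m) M - ∑ l ∈ Finset.range i, aH v M m l • aQ v M l := by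
  intro i
  induction i with
  | zero => intro _; simp [pres_zero]
  | succ i ih =>
    intro h
    rw [pres_succ v M m i (by omega), gsStep, Finset.sum_range_succ, aH, ih (by omega)]
    abel

end lems
section orth
variable {n : ℕ} (v : Fin n → ℝ) (M : Matrix (Fin n) (Fin n) ℝ)

lemma dot_self_nonneg (w : Fin n → ℝ) : 0 ≤ w ⬝ᵥ w :=
  Finset.sum_nonneg fun i _ => mul_self_nonneg (w i)

lemma norm2_mul_self (w : Fin n → ℝ) : norm2 w * norm2 w = w ⬝ᵥ w :=
  Real.mul_self_sqrt (dot_self_nonneg w)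

lemma norm2_ne_zero {w : Fin n → ℝ} (hw : w ≠ 0) : norm2 w ≠ 0 := by
  intro h
  apply hw
  have : w ⬝ᵥ w = 0 := by rw [← norm2_mul_self, h, mul_zero]
  exact dotProduct_self_eq_zero.mp this

lemma unit_of_ne_zero {w : Fin n → ℝ} (hw : norm2 w ≠ 0) :
    ((norm2 w)⁻¹ • w) ⬝ᵥ ((norm2 w)⁻¹ • w) = 1 := by
  rw [smul_dotProduct, dotProduct_smul, ← norm2_mul_self]
  simp only [smul_eq_mul]
  field_simp

/-- residual orthogonality, assuming orthonormality up to `m`. -/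
lemma pres_orth (m : ℕ)
    (hON : ∀ k l, k ≤ m → l ≤ m → aQ v M k ⬝ᵥ aQ v M l = if k = l then 1 else 0) :
    ∀ i l, l < i → i ≤ m + 1 → pres v M m i ⬝ᵥ aQ v M l = 0 := by
  intro i
  induction i with
  | zero => omega
  | succ i ih =>
    intro l hl hi
    rw [pres_succ v M m i (by omega), gsStep, sub_dotProduct,
      smul_dotProduct]
    rcases Nat.lt_or_ge l i with h | h
    · rw [hON i l (by omega) (by omega), if_neg (by omega)]
      rw [ih l h (by omega)]
      simp
    · have : l = i := by omega
      subst this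
      rw [hON l l (by omega) (by omega), if_pos rfl]
      ring_nf

lemma ortho (hv : v ≠ 0) : ∀ m, (∀ i, i < m → hsub v M i ≠ 0) →
    ∀ k l, k ≤ m → l ≤ m → aQ v M k ⬝ᵥ aQ v M l = if k = l then 1 else 0 := by
  intro m
  induction m with
  | zero =>
    intro _ k l hk hl
    interval_cases k; interval_cases l
    rw [if_pos rfl]
    have : aQ v M 0 = (norm2 v)⁻¹ • v := rfl
    rw [this]
    exact unit_of_ne_zero (norm2_ne_zero hv)
  | succ m ih =>
    intro hs k l hk hl
    have hON := ih (fun i hi => hs i (by omega))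
    have hr : norm2 (pres v M m (m+1)) ≠ 0 := hs m (by omega)
    have hq : aQ v M (m+1) = (norm2 (pres v M m (m+1)))⁻¹ • pres v M m (m+1) :=
      aQ_succ v M m
    have horth : ∀ l, l ≤ m → aQ v M (m+1) ⬝ᵥ aQ v M l = 0 := by
      intro l hl
      rw [hq, smul_dotProduct,
        pres_orth v M m hON (m+1) l (by omega) (by omega), smul_zero]
    rcases Nat.lt_or_ge k (m+1) with hk' | hk' <;> rcases Nat.lt_or_ge l (m+1) with hl' | hl'
    · exact hON k l (by omega) (by omega)
    · have : l = m + 1 := by omega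
      subst this
      rw [dotProduct_comm, horth k (by omega), if_neg (by omega)]
    · have : k = m + 1 := by omega
      subst this
      rw [horth l (by omega), if_neg (by omega)]
    · have h1 : k = m + 1 := by omega
      have h2 : l = m + 1 := by omega
      subst h1; subst h2
      rw [if_pos rfl, hq]
      exact unit_of_ne_zero hr

end orth
section rel
variable {n : ℕ} (v : Fin n → ℝ) (M : Matrix (Fin n) (Fin n) ℝ)

lemma pres_eq_smul (m : ℕ) :
    pres v M m (m+1) = hsub v M m • aQ v M (m+1) := by
  rw [aQ_succ, hsub, smul_smul]
  rcases eq_or_ne (norm2 (pres v M m (m+1))) 0 with h | h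
  · have : pres v M m (m+1) ⬝ᵥ pres v M m (m+1) = 0 := by
      rw [← norm2_mul_self, h, mul_zero]
    rw [dotProduct_self_eq_zero.mp this]
    simp
  · rw [mul_inv_cancel₀ h, one_smul]

lemma arnoldi_rel (m : ℕ) :
    Matrix.vecMul (aQ v M m) M =
      (∑ l ∈ Finset.range (m+1), aH v M m l • aQ v M l) + hsub v M m • aQ v M (m+1) := by
  have h := pres_formula v M m (m+1) (le_refl _)
  rw [pres_eq_smul] at h
  rw [← sub_eq_iff_eq_add']
  exact h.symm

end rel



/-- under invariance of `K^j(p₀,P)`, any left eigenvector `π` of `H_j` with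
eigenvalue `1` disaggregates to a left eigenvector `μ = π Q_j` of `P` with eigenvalue `1`. -/
theorem arnoldi_stationary_disaggregation {n j : ℕ} (hj : 0 < j)
    (P : Matrix (Fin n) (Fin n) ℝ)
    (hPnn : ∀ i l, 0 ≤ P i l) (hProw : ∀ i, ∑ l, P i l = 1)
    (p₀ : Fin n → ℝ) (hp₀ : p₀ ≠ 0)
    (hrun : ∀ i, i + 1 < j → hsub p₀ P i ≠ 0)
    (hinv : ∀ w ∈ krylov p₀ P j, Matrix.vecMul w P ∈ krylov p₀ P j)
    (π : Fin j → ℝ) (heig : Matrix.vecMul π (arnoldiHmat p₀ P j) = π) :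
    Matrix.vecMul (Matrix.vecMul π (arnoldiQmat p₀ P j)) P =
      Matrix.vecMul π (arnoldiQmat p₀ P j) := by
  set K := krylov p₀ P j with hK
  have hp0K : p₀ ∈ K := by
    have h := Submodule.subset_span (R := ℝ)
      (Set.mem_range_self (f := fun i : Fin j => Matrix.vecMul p₀ (P ^ (i : ℕ))) ⟨0, hj⟩)
    simpa [hK, krylov] using h
  have hq0 : aQ p₀ P 0 ∈ K := by
    have : aQ p₀ P 0 = (norm2 p₀)⁻¹ • p₀ := rfl
    rw [this]
    exact Submodule.smul_mem _ _ hp0K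
  have hqK : ∀ l, l < j → ∀ k, k ≤ l → aQ p₀ P k ∈ K := by
    intro l
    induction l with
    | zero => intro _ k hk; interval_cases k; exact hq0
    | succ l ih =>
      intro hl k hk
      rcases Nat.lt_or_ge k (l+1) with h | h
      · exact ih (by omega) k (by omega)
      · have hkl : k = l + 1 := by omega
        subst hkl
        rw [aQ_succ]
        apply Submodule.smul_mem
        rw [pres_formula p₀ P l (l+1) (le_refl _)]
        apply Submodule.sub_mem
        · exact hinv _ (ih (by omega) l (le_refl _))
        · apply Submodule.sum_mem
          intro m hm
          simp only [Finset.mem_range] at hm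
          exact Submodule.smul_mem _ _ (ih (by omega) m (by omega))
  set S := Submodule.span ℝ (Set.range fun l : Fin j => aQ p₀ P l) with hS
  have key : ∀ i, Matrix.vecMul p₀ (P ^ i) ∈
      Submodule.span ℝ ((fun l : ℕ => aQ p₀ P l) '' Set.Iic i) := by
    intro i
    induction i with
    | zero =>
      have h0 : Matrix.vecMul p₀ (P ^ 0) = norm2 p₀ • aQ p₀ P 0 := by
        have : aQ p₀ P 0 = (norm2 p₀)⁻¹ • p₀ := rfl
        rw [this, smul_smul, mul_inv_cancel₀ (norm2_ne_zero hp₀), one_smul]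
        simp
      rw [h0]
      exact Submodule.smul_mem _ _
        (Submodule.subset_span ⟨0, Set.mem_Iic.mpr (le_refl 0), rfl⟩)
    | succ i ih =>
      have hstep : Matrix.vecMul p₀ (P ^ (i+1)) =
          Matrix.vecMulLinear P (Matrix.vecMul p₀ (P ^ i)) := by
        rw [Matrix.vecMulLinear_apply, Matrix.vecMul_vecMul, ← pow_succ]
      rw [hstep]
      have hmap := Submodule.mem_map_of_mem (f := Matrix.vecMulLinear P) ih
      rw [Submodule.map_span] at hmap
      refine Submodule.span_le.mpr ?_ hmap
      rintro _ ⟨_, ⟨l, hl, rfl⟩, rfl⟩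
      rw [Matrix.vecMulLinear_apply, arnoldi_rel]
      apply Submodule.add_mem
      · apply Submodule.sum_mem
        intro m hm
        simp only [Finset.mem_range] at hm
        apply Submodule.smul_mem
        exact Submodule.subset_span ⟨m, by simp at hl ⊢; omega, rfl⟩
      · apply Submodule.smul_mem
        exact Submodule.subset_span ⟨l + 1, by simp at hl ⊢; omega, rfl⟩
  have hKS : K ≤ S := by
    rw [hK, krylov]
    apply Submodule.span_le.mpr
    rintro _ ⟨i, rfl⟩
    refine Submodule.span_le.mpr ?_ (key i)
    rintro _ ⟨l, hl, rfl⟩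
    refine Submodule.subset_span ⟨⟨l, ?_⟩, rfl⟩
    simp only [Set.mem_Iic] at hl
    omega
  -- orthonormality up to j - 1
  have hON : ∀ k l, k ≤ j - 1 → l ≤ j - 1 →
      aQ p₀ P k ⬝ᵥ aQ p₀ P l = if k = l then 1 else 0 :=
    ortho p₀ P hp₀ (j - 1) (fun i hi => hrun i (by omega))
  -- final residual is zero
  have hr0 : pres p₀ P (j - 1) j = 0 := by
    set r := pres p₀ P (j - 1) j with hrdef
    have hrK : r ∈ K := by
      rw [hrdef, pres_formula p₀ P (j - 1) j (by omega)]
      apply Submodule.sub_mem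
      · exact hinv _ (hqK (j - 1) (by omega) (j - 1) (le_refl _))
      · apply Submodule.sum_mem
        intro m hm
        simp only [Finset.mem_range] at hm
        exact Submodule.smul_mem _ _ (hqK (j - 1) (by omega) m (by omega))
    obtain ⟨c, hc⟩ := (Submodule.mem_span_range_iff_exists_fun ℝ).mp (hKS hrK)
    have horth : ∀ l : Fin j, r ⬝ᵥ aQ p₀ P l = 0 := fun l =>
      pres_orth p₀ P (j - 1) hON j l (by omega) (by omega)
    have hdot : r ⬝ᵥ r = 0 := by
      calc r ⬝ᵥ r = (∑ i : Fin j, c i • aQ p₀ P (i : ℕ)) ⬝ᵥ r := by rw [hc]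
        _ = ∑ i : Fin j, c i * (aQ p₀ P (i : ℕ) ⬝ᵥ r) := by
            simp only [dotProduct, Finset.sum_apply, Pi.smul_apply, smul_eq_mul,
              Finset.sum_mul, Finset.mul_sum]
            rw [Finset.sum_comm]
            exact Finset.sum_congr rfl fun _ _ => Finset.sum_congr rfl fun _ _ =>
              mul_assoc _ _ _
        _ = 0 := by
            apply Finset.sum_eq_zero
            intro i _
            rw [dotProduct_comm, horth i, mul_zero]
    exact dotProduct_self_eq_zero.mp hdot
  -- row identity: Q P = H Q
  have hrow : ∀ i : Fin j, Matrix.vecMul (aQ p₀ P (i : ℕ)) P =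
      ∑ l : Fin j, arnoldiHmat p₀ P j i l • aQ p₀ P (l : ℕ) := by
    intro i
    set g : ℕ → (Fin n → ℝ) := fun l =>
      (if l ≤ (i : ℕ) then aH p₀ P i l
        else if l = (i : ℕ) + 1 then hsub p₀ P i else 0) • aQ p₀ P l with hg
    have hsum : ∑ l : Fin j, arnoldiHmat p₀ P j i l • aQ p₀ P (l : ℕ) =
        ∑ l ∈ Finset.range j, g l := by
      rw [← Fin.sum_univ_eq_sum_range g j]
      rfl
    rw [hsum]
    rcases Nat.lt_or_ge ((i : ℕ) + 1) j with hij | hij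
    · -- interior row
      have h1 : ∑ l ∈ Finset.range j, g l = ∑ l ∈ Finset.range ((i : ℕ) + 2), g l := by
        refine (Finset.sum_subset (Finset.range_subset_range.mpr (by omega)) ?_).symm
        intro x hx hx'
        simp only [Finset.mem_range] at hx hx'
        rw [hg]
        simp only [if_neg (by omega : ¬ x ≤ (i : ℕ)), if_neg (by omega : ¬ x = (i : ℕ) + 1),
          zero_smul]
      rw [h1, Finset.sum_range_succ]
      have h2 : g ((i : ℕ) + 1) = hsub p₀ P i • aQ p₀ P ((i : ℕ) + 1) := by
        rw [hg]; simp
      have h3 : ∑ l ∈ Finset.range ((i : ℕ) + 1), g l =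
          ∑ l ∈ Finset.range ((i : ℕ) + 1), aH p₀ P i l • aQ p₀ P l := by
        apply Finset.sum_congr rfl
        intro x hx
        simp only [Finset.mem_range] at hx
        rw [hg]
        simp only [if_pos (by omega : x ≤ (i : ℕ))]
      rw [h2, h3, arnoldi_rel]
    · -- last row
      have hieq : (i : ℕ) = j - 1 := by omega
      have hform := pres_formula p₀ P (j - 1) j (by omega)
      rw [hr0] at hform
      have hvec : Matrix.vecMul (aQ p₀ P (j - 1)) P =
          ∑ l ∈ Finset.range j, aH p₀ P (j - 1) l • aQ p₀ P l := by
        have := hform.symm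
        rw [sub_eq_zero] at this
        exact this.symm ▸ rfl
      have h3 : ∑ l ∈ Finset.range j, g l =
          ∑ l ∈ Finset.range j, aH p₀ P i l • aQ p₀ P l := by
        apply Finset.sum_congr rfl
        intro x hx
        simp only [Finset.mem_range] at hx
        rw [hg]
        simp only [if_pos (by omega : x ≤ (i : ℕ))]
      rw [h3, hieq, hvec]
  -- assemble
  have hQP : arnoldiQmat p₀ P j * P = arnoldiHmat p₀ P j * arnoldiQmat p₀ P j := by
    ext i k
    have h := congrFun (hrow i) k
    simp only [Matrix.mul_apply, arnoldiQmat]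
    calc ∑ m, aQ p₀ P (i : ℕ) m * P m k = Matrix.vecMul (aQ p₀ P (i : ℕ)) P k := by
          simp [Matrix.vecMul, dotProduct]
      _ = (∑ l : Fin j, arnoldiHmat p₀ P j i l • aQ p₀ P (l : ℕ)) k := h
      _ = ∑ l : Fin j, arnoldiHmat p₀ P j i l * aQ p₀ P (l : ℕ) k := by
          rw [Finset.sum_apply]; simp
  calc Matrix.vecMul (Matrix.vecMul π (arnoldiQmat p₀ P j)) P
      = Matrix.vecMul π (arnoldiQmat p₀ P j * P) := Matrix.vecMul_vecMul _ _ _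
    _ = Matrix.vecMul π (arnoldiHmat p₀ P j * arnoldiQmat p₀ P j) := by rw [hQP]
    _ = Matrix.vecMul (Matrix.vecMul π (arnoldiHmat p₀ P j)) (arnoldiQmat p₀ P j) :=
        (Matrix.vecMul_vecMul _ _ _).symm
    _ = Matrix.vecMul π (arnoldiQmat p₀ P j) := by rw [heig]
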